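/- Let R be a ring and let A', A, A'', C be R-modules with homomorphisms ρ : A' → C, φ : C → A, φ' : A' → A, η : A → A'', ψ : C → A'' such that the diagram is commutative (φ ∘ ρ = φ' and η ∘ φ = ψ) and the row A' →(φ') A →(η) A'' is exact at A (i.e. im φ' = ker η). Then im φ' ⊆ im φ and there is an isomorphism of R-modules im φ / im φ' ≅ im ψ. -/
import Mathlib


/-- Lemma 6.1 ([Cartan–Eilenberg], Lemma XV 1.1): given a commutative diagram of
`R`-modules with exact row `A' → A → A''` and a module `C` mapping compatibly to each
term, one has `im φ' ⊆ im φ` and `im φ / im φ' ≅ im ψ`. -/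
theorem im_quotient_iso_im_of_commutative_diagram
    {R : Type*} [Ring R] {A' A A'' C : Type*}
    [AddCommGroup A'] [AddCommGroup A] [AddCommGroup A''] [AddCommGroup C]
    [Module R A'] [Module R A] [Module R A''] [Module R C]
    (ρ : A' →ₗ[R] C) (φ : C →ₗ[R] A) (φ' : A' →ₗ[R] A)
    (η : A →ₗ[R] A'') (ψ : C →ₗ[R] A'')
    (hcomm₁ : φ.comp ρ = φ') (hcomm₂ : η.comp φ = ψ)
    (hexact : LinearMap.range φ' = LinearMap.ker η) :
    LinearMap.range φ' ≤ LinearMap.range φ ∧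
    Nonempty
      ((↥(LinearMap.range φ) ⧸
          (LinearMap.range φ').comap (LinearMap.range φ).subtype) ≃ₗ[R]
        ↥(LinearMap.range ψ)) := by
  constructor
  · rintro x ⟨a, rfl⟩
    exact ⟨ρ a, by rw [← hcomm₁]; rfl⟩
  · set f : ↥(LinearMap.range φ) →ₗ[R] A'' := η.comp (LinearMap.range φ).subtype with hf
    have hker : LinearMap.ker f = (LinearMap.range φ').comap (LinearMap.range φ).subtype := by
      rw [hf, LinearMap.ker_comp, hexact]
    have hrange : LinearMap.range f = LinearMap.range ψ := by
      apply le_antisymm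
      · rintro x ⟨⟨a, c, rfl⟩, rfl⟩
        exact ⟨c, by rw [← hcomm₂]; rfl⟩
      · rintro x ⟨c, rfl⟩
        exact ⟨⟨φ c, c, rfl⟩, by rw [← hcomm₂]; rfl⟩
    exact ⟨(Submodule.Quotient.equiv _ _ (LinearEquiv.refl R _) (by ext x; simp [hker])).trans
      ((f.quotKerEquivRange).trans (LinearEquiv.ofEq _ _ hrange))⟩
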